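/- Let ζ(θ) = α(θ - θ̄) if ‖θ - θ̄‖ ≥ d and ζ(θ) = 0 if ‖θ - θ̄‖ < d, where α > 0, d ≥ 0, θ̄ ∈ ℝ^m. Then for all θ, θ* ∈ ℝ^m, ⟨ζ(θ), θ - θ*⟩ ≥ (α/2)‖θ - θ*‖² - (α/2)(‖θ̄ - θ*‖ + d)². -/

import Mathlib

open RealInnerProductSpace

theorem condition_NF_deadzone (m : ℕ) (α d : ℝ) (hα : 0 < α) (hd : 0 ≤ d)
    (θbar : EuclideanSpace ℝ (Fin m)) (ζ : EuclideanSpace ℝ (Fin m) → EuclideanSpace ℝ (Fin m))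
    (hζ : ∀ θ, ζ θ = if d ≤ ‖θ - θbar‖ then α • (θ - θbar) else 0) :
    ∀ θ θs : EuclideanSpace ℝ (Fin m),
      (inner ℝ (ζ θ) (θ - θs) : ℝ) ≥ (α / 2) * ‖θ - θs‖ ^ 2 - (α / 2) * (‖θbar - θs‖ + d) ^ 2 := by
  intro θ θs
  rw [hζ]
  split_ifs with h
  · rw [real_inner_smul_left]
    have key : (inner ℝ (θ - θbar) (θ - θs) : ℝ)
        = ‖θ - θs‖ ^ 2 + inner ℝ (θs - θbar) (θ - θs) := by
      have hdecomp : θ - θbar = (θ - θs) + (θs - θbar) := by abel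
      rw [hdecomp, inner_add_left, real_inner_self_eq_norm_sq]
    have cs : |(inner ℝ (θs - θbar) (θ - θs) : ℝ)| ≤ ‖θs - θbar‖ * ‖θ - θs‖ :=
      abs_real_inner_le_norm _ _
    have hb : ‖θs - θbar‖ = ‖θbar - θs‖ := norm_sub_rev _ _
    have hnn : (0:ℝ) ≤ ‖θ - θs‖ := norm_nonneg _
    have hnn2 : (0:ℝ) ≤ ‖θbar - θs‖ := norm_nonneg _
    rw [hb] at cs
    rw [key]
    nlinarith [abs_le.mp cs, mul_nonneg hα.le (sq_nonneg (‖θ - θs‖ - ‖θbar - θs‖)),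
      mul_nonneg hα.le (mul_nonneg hd hnn2), mul_nonneg hα.le (mul_nonneg hd hd)]
  · simp only [inner_zero_left]
    push_neg at h
    have htri : ‖θ - θs‖ ≤ ‖θ - θbar‖ + ‖θbar - θs‖ :=
      norm_sub_le_norm_sub_add_norm_sub _ _ _
    have hnn : (0:ℝ) ≤ ‖θ - θs‖ := norm_nonneg _
    have hnn2 : (0:ℝ) ≤ ‖θbar - θs‖ := norm_nonneg _
    have h2 : ‖θ - θs‖ ^ 2 ≤ (‖θbar - θs‖ + d) ^ 2 := by nlinarith
    nlinarith [mul_le_mul_of_nonneg_left h2 (by linarith : (0:ℝ) ≤ α / 2)]
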